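/- Let G be an abelian group with subgroups K and M̂ such that G = K + M̂. Assume: K is torsion-free and fully invariant in G; K is an R-module for some subring R ⊆ ℚ with End(K) = R; G/K is torsion-free with End(G/K) ≅ ℤ; Hom(M̂, K) = 0 = Hom(K, G/K); and K ∩ M̂ ≠ 0. Then End(G) ≅ ℤ and the quotient map c : G → G/K is a cellular cover. -/

import Mathlib

/-- Key auxiliary fact: an endomorphism of `G` that maps `K` into `K` and kills
`Mhat` must be zero, given `K ⊔ Mhat = ⊤`, `K` torsion-free with rational
endomorphisms, and `K ⊓ Mhat ≠ ⊥`. -/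
private lemma key_zero {G : Type*} [AddCommGroup G] (K Mhat : AddSubgroup G)
    (hsum : K ⊔ Mhat = ⊤)
    (hKtf : NoZeroSMulDivisors ℤ ↥K)
    (R : Subring ℚ)
    (hEndK : ∀ f : ↥K →+ ↥K, ∃ r : R,
      ∀ x : ↥K, ((r : ℚ).den : ℤ) • f x = (r : ℚ).num • x)
    (hint : K ⊓ Mhat ≠ ⊥)
    (ν : G →+ G)
    (hνK : ∀ x ∈ K, ν x ∈ K)
    (hνM : ∀ x ∈ Mhat, ν x = 0) : ν = 0 := by
  -- restrict ν to an endomorphism of K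
  set νK : ↥K →+ ↥K := (ν.comp K.subtype).codRestrict K (fun x => hνK x.1 x.2) with hνKdef
  have hνKval : ∀ x : ↥K, (νK x : G) = ν x := fun x => rfl
  obtain ⟨r, hr⟩ := hEndK νK
  -- a nonzero element of K ⊓ Mhat
  rw [Ne, AddSubgroup.eq_bot_iff_forall] at hint
  push_neg at hint
  obtain ⟨x₀, hx₀, hx₀ne⟩ := hint
  have hx₀K : x₀ ∈ K := hx₀.1
  have hx₀M : x₀ ∈ Mhat := hx₀.2
  -- νK kills x₀, so num r = 0
  have hν0 : νK ⟨x₀, hx₀K⟩ = 0 := by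
    apply Subtype.ext
    simpa [hνKval] using hνM x₀ hx₀M
  have hnum : (r : ℚ).num = 0 := by
    have := hr ⟨x₀, hx₀K⟩
    rw [hν0, smul_zero] at this
    rcases smul_eq_zero.mp this.symm with h | h
    · exact h
    · exact absurd (congrArg Subtype.val h) hx₀ne
  -- hence νK = 0
  have hKzero : ∀ x ∈ K, ν x = 0 := by
    intro x hx
    have := hr ⟨x, hx⟩
    rw [hnum, zero_smul] at this
    have hden : ((r : ℚ).den : ℤ) ≠ 0 := by
      exact_mod_cast (r : ℚ).den_nz
    rcases smul_eq_zero.mp this with h | h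
    · exact absurd h hden
    · simpa [Subtype.ext_iff, hνKval] using h
  -- ν vanishes on K and on Mhat, hence on all of G
  ext g
  have hg : g ∈ K ⊔ Mhat := hsum ▸ AddSubgroup.mem_top g
  obtain ⟨y, hy, z, hz, rfl⟩ := AddSubgroup.mem_sup.mp hg
  simp [map_add, hKzero y hy, hνM z hz]

theorem end_int_and_quotient_cellular_cover
    {G : Type*} [AddCommGroup G] (K Mhat : AddSubgroup G)
    (hsum : K ⊔ Mhat = ⊤)
    (hKtf : NoZeroSMulDivisors ℤ ↥K)
    (hfi : ∀ μ : G →+ G, ∀ x ∈ K, μ x ∈ K)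
    (R : Subring ℚ)
    (hEndK : ∀ f : ↥K →+ ↥K, ∃ r : R,
      ∀ x : ↥K, ((r : ℚ).den : ℤ) • f x = (r : ℚ).num • x)
    (hMtf : NoZeroSMulDivisors ℤ (G ⧸ K))
    (hEndM : ∀ φ : G ⧸ K →+ G ⧸ K, ∃ n : ℤ, ∀ x, φ x = n • x)
    (hMK : ∀ f : ↥Mhat →+ ↥K, f = 0)
    (hKM : ∀ f : ↥K →+ G ⧸ K, f = 0)
    (hint : K ⊓ Mhat ≠ ⊥) :
    (∀ μ : G →+ G, ∃ n : ℤ, ∀ x, μ x = n • x) ∧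
    Function.Bijective fun ψ : G →+ G => (QuotientAddGroup.mk' K).comp ψ := by
  -- A sub-lemma: any ν : G →+ G with π ∘ ν = 0 vanishes.
  have main0 : ∀ ν : G →+ G, (∀ x, ν x ∈ K) → ν = 0 := by
    intro ν hν
    -- ν restricted to Mhat lands in K, so it is zero there
    have hνM : ∀ x ∈ Mhat, ν x = 0 := by
      intro x hx
      have h0 := hMK ((ν.comp Mhat.subtype).codRestrict K (fun y => hν y.1))
      have := congrArg Subtype.val (DFunLike.congr_fun h0 (⟨x, hx⟩ : ↥Mhat))
      exact this
    exact key_zero K Mhat hsum hKtf R hEndK hint ν (fun x _ => hν x) hνM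
  have part1 : ∀ μ : G →+ G, ∃ n : ℤ, ∀ x, μ x = n • x := by
    intro μ
    -- induced endomorphism of G/K
    have hmap : K ≤ K.comap μ := fun x hx => hfi μ x hx
    set μbar := QuotientAddGroup.map K K μ hmap with hμbar
    obtain ⟨n, hn⟩ := hEndM μbar
    refine ⟨n, fun x => ?_⟩
    have hdiff : ∀ g : G, μ g - n • g ∈ K := by
      intro g
      have h1 : μbar ((g : G ⧸ K)) = ((μ g : G) : G ⧸ K) := rfl
      have h2 := hn ((g : G) : G ⧸ K)
      rw [h1] at h2
      have : ((μ g - n • g : G) : G ⧸ K) = 0 := by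
        rw [QuotientAddGroup.mk_sub, h2]
        simp
      exact (QuotientAddGroup.eq_zero_iff _).mp this
    have := main0 (μ - n • AddMonoidHom.id G) (by
      intro g
      simpa using hdiff g)
    have := DFunLike.congr_fun this x
    simp only [AddMonoidHom.sub_apply, AddMonoidHom.smul_apply, AddMonoidHom.id_apply,
      AddMonoidHom.zero_apply, sub_eq_zero] at this
    exact this
  refine ⟨part1, ?_, ?_⟩
  · -- injective
    intro ψ₁ ψ₂ h
    have hν : ∀ x, (ψ₁ - ψ₂) x ∈ K := by
      intro x
      have := DFunLike.congr_fun h x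
      simp only [AddMonoidHom.comp_apply, QuotientAddGroup.mk'_apply] at this
      have : ((ψ₁ x - ψ₂ x : G) : G ⧸ K) = 0 := by
        rw [QuotientAddGroup.mk_sub, this]; simp
      simpa using (QuotientAddGroup.eq_zero_iff _).mp this
    have := main0 (ψ₁ - ψ₂) hν
    exact sub_eq_zero.mp this
  · -- surjective
    intro φ
    have hφK : ∀ x ∈ K, φ x = 0 := by
      intro x hx
      have h0 := hKM (φ.comp K.subtype)
      have := DFunLike.congr_fun h0 (⟨x, hx⟩ : ↥K)
      simpa using this
    set φbar := QuotientAddGroup.lift K φ hφK with hφbar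
    obtain ⟨n, hn⟩ := hEndM φbar
    refine ⟨n • AddMonoidHom.id G, ?_⟩
    ext x
    simp only [AddMonoidHom.comp_apply, AddMonoidHom.smul_apply, AddMonoidHom.id_apply,
      QuotientAddGroup.mk'_apply]
    have h1 : φbar ((x : G ⧸ K)) = φ x := rfl
    calc ((n • x : G) : G ⧸ K) = n • ((x : G) : G ⧸ K) := by simp
    _ = φbar ((x : G) : G ⧸ K) := (hn _).symm
    _ = φ x := h1
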